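/- (Shortening lemma, stated in this paper as Lemma 3). Let G be an invertible ℓ×ℓ matrix over GF(2) defining the linear kernel g(u) = u·G, and assume the partial distance sequence D_g(0) ≤ ⋯ ≤ D_g(ℓ−1) is non-decreasing. Suppose column j of G has its last 1 in row k (i.e., G_{k,j} = 1 and G_{r,j} = 0 for all r > k). Let G̃ be the (ℓ−1)×(ℓ−1) matrix obtained by adding row k to every row of G that has a 1 in column j and then deleting row k and column j, and let g̃(v) = v·G̃ be the corresponding linear kernel of ℓ−1 dimensions. Then D_{g̃}(i) ≥ D_g(i) for 0 ≤ i ≤ k−1, and D_{g̃}(i) = D_g(i+1) for k ≤ i ≤ ℓ−2. -/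

import Mathlib

/-- The `i`-th partial distance of a kernel `g` of `ℓ` dimensions:
`D_g(i) = min { d_H(g(w•0•u), g(w•1•v)) : w ∈ {0,1}^i, u, v ∈ {0,1}^{ℓ−1−i} }`,
phrased via pairs of inputs that agree on coordinates `< i` and differ as `0`/`1`
at coordinate `i`. -/
noncomputable def partialDist {ℓ : ℕ} (g : (Fin ℓ → ZMod 2) → (Fin ℓ → ZMod 2)) (i : ℕ) : ℕ :=
  sInf { d | ∃ x y : Fin ℓ → ZMod 2,
    (∀ j : Fin ℓ, (j : ℕ) < i → x j = y j) ∧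
    (∀ j : Fin ℓ, (j : ℕ) = i → x j = 0 ∧ y j = 1) ∧
    d = hammingDist (g x) (g y) }

lemma partialDist_le {ℓ : ℕ} (g : (Fin ℓ → ZMod 2) → (Fin ℓ → ZMod 2)) (i : ℕ)
    (x y : Fin ℓ → ZMod 2)
    (h1 : ∀ j : Fin ℓ, (j : ℕ) < i → x j = y j)
    (h2 : ∀ j : Fin ℓ, (j : ℕ) = i → x j = 0 ∧ y j = 1) :
    partialDist g i ≤ hammingDist (g x) (g y) :=
  Nat.sInf_le ⟨x, y, h1, h2, rfl⟩

lemma partialDist_exists {ℓ : ℕ} (g : (Fin ℓ → ZMod 2) → (Fin ℓ → ZMod 2)) (i : ℕ) :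
    ∃ x y : Fin ℓ → ZMod 2,
      (∀ j : Fin ℓ, (j : ℕ) < i → x j = y j) ∧
      (∀ j : Fin ℓ, (j : ℕ) = i → x j = 0 ∧ y j = 1) ∧
      partialDist g i = hammingDist (g x) (g y) := by
  classical
  have hne : { d | ∃ x y : Fin ℓ → ZMod 2,
      (∀ j : Fin ℓ, (j : ℕ) < i → x j = y j) ∧
      (∀ j : Fin ℓ, (j : ℕ) = i → x j = 0 ∧ y j = 1) ∧
      d = hammingDist (g x) (g y) }.Nonempty := by
    refine ⟨_, fun _ => 0, fun m => if (m : ℕ) = i then 1 else 0, ?_, ?_, rfl⟩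
    · intro m hm
      simp [Nat.ne_of_lt hm]
    · intro m hm
      simp [hm]
  obtain ⟨x, y, h1, h2, hd⟩ := Nat.sInf_mem hne
  exact ⟨x, y, h1, h2, hd⟩

lemma ham_succAbove {N : ℕ} (p : Fin (N + 1)) (f g : Fin (N + 1) → ZMod 2)
    (h : f p = g p) :
    hammingDist (fun c => f (p.succAbove c)) (fun c => g (p.succAbove c)) =
      hammingDist f g := by
  classical
  unfold hammingDist
  rw [Finset.card_filter, Finset.card_filter,
    Fin.sum_univ_succAbove (fun m => if f m ≠ g m then 1 else 0) p]
  simp [h]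

lemma zmod2_cases (a : ZMod 2) : a = 0 ∨ a = 1 := by
  fin_cases a <;> [exact Or.inl rfl; exact Or.inr rfl]

theorem shortening_lemma {n : ℕ}
    (G : Matrix (Fin (n + 1)) (Fin (n + 1)) (ZMod 2)) (hG : IsUnit G)
    (k j : Fin (n + 1))
    (hkj : G k j = 1) (hlast : ∀ r : Fin (n + 1), k < r → G r j = 0)
    (hmono : ∀ i, i + 1 < n + 1 →
      partialDist (fun u => Matrix.vecMul u G) i ≤
        partialDist (fun u => Matrix.vecMul u G) (i + 1))
    (G' : Matrix (Fin n) (Fin n) (ZMod 2))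
    (hG' : ∀ r c, G' r c =
      if G (k.succAbove r) j = 1
      then G (k.succAbove r) (j.succAbove c) + G k (j.succAbove c)
      else G (k.succAbove r) (j.succAbove c)) :
    Function.Bijective (fun u => Matrix.vecMul u G') ∧
    (∀ i, i < (k : ℕ) →
      partialDist (fun u => Matrix.vecMul u G) i ≤
        partialDist (fun u => Matrix.vecMul u G') i) ∧
    (∀ i, (k : ℕ) ≤ i → i < n →
      partialDist (fun u => Matrix.vecMul u G') i =
        partialDist (fun u => Matrix.vecMul u G) (i + 1)) := by
  classical
  -- the lifting map
  set lift : (Fin n → ZMod 2) → (Fin (n + 1) → ZMod 2) :=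
    fun v => k.insertNth (∑ r, v r * G (k.succAbove r) j) v with hliftdef
  have lift_k : ∀ v, lift v k = ∑ r, v r * G (k.succAbove r) j := by
    intro v; simp [hliftdef]
  have lift_sA : ∀ v r, lift v (k.succAbove r) = v r := by
    intro v r; simp [hliftdef]
  -- values of succAbove
  have hσval : ∀ r : Fin n,
      ((r : ℕ) < (k : ℕ) ∧ ((k.succAbove r : Fin (n + 1)) : ℕ) = r) ∨
      ((k : ℕ) ≤ (r : ℕ) ∧ ((k.succAbove r : Fin (n + 1)) : ℕ) = r + 1) := by
    intro r
    unfold Fin.succAbove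
    split
    · rename_i h
      exact Or.inl ⟨by simpa [Fin.lt_def] using h, by simp⟩
    · rename_i h
      refine Or.inr ⟨?_, by simp⟩
      simpa [Fin.lt_def] using h
  -- column j of the lifted vector is zero
  have hcolj : ∀ v, Matrix.vecMul (lift v) G j = 0 := by
    intro v
    simp only [Matrix.vecMul, dotProduct]
    rw [Fin.sum_univ_succAbove (fun m => lift v m * G m j) k]
    simp only [lift_k, lift_sA, hkj, mul_one]
    exact CharTwo.add_self_eq_zero _
  -- G' entries
  have hG'' : ∀ r c, G' r c =
      G (k.succAbove r) (j.succAbove c) + G (k.succAbove r) j * G k (j.succAbove c) := by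
    intro r c
    rcases zmod2_cases (G (k.succAbove r) j) with h | h <;> simp [hG' r c, h]
  -- vecMul with G' via the lift
  have hG'vm : ∀ v c, Matrix.vecMul v G' c = Matrix.vecMul (lift v) G (j.succAbove c) := by
    intro v c
    simp only [Matrix.vecMul, dotProduct]
    rw [Fin.sum_univ_succAbove (fun m => lift v m * G m (j.succAbove c)) k]
    simp only [lift_k, lift_sA]
    rw [Finset.sum_mul, ← Finset.sum_add_distrib]
    refine Finset.sum_congr rfl fun r _ => ?_
    rw [hG'' r c]; ring
  -- C1 : hamming distances via lift
  have hamlift : ∀ x y : Fin n → ZMod 2,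
      hammingDist (Matrix.vecMul x G') (Matrix.vecMul y G') =
        hammingDist (Matrix.vecMul (lift x) G) (Matrix.vecMul (lift y) G) := by
    intro x y
    have h1 : Matrix.vecMul x G' = fun c => Matrix.vecMul (lift x) G (j.succAbove c) :=
      funext (hG'vm x)
    have h2 : Matrix.vecMul y G' = fun c => Matrix.vecMul (lift y) G (j.succAbove c) :=
      funext (hG'vm y)
    rw [h1, h2, ham_succAbove j _ _ (by rw [hcolj, hcolj])]
  -- C2 : for restrictions of vectors that agree on coordinates ≤ k
  have hC2 : ∀ x' y' : Fin (n + 1) → ZMod 2,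
      (∀ m : Fin (n + 1), (m : ℕ) ≤ (k : ℕ) → x' m = y' m) →
      hammingDist (Matrix.vecMul (fun r => x' (k.succAbove r)) G')
          (Matrix.vecMul (fun r => y' (k.succAbove r)) G') =
        hammingDist (Matrix.vecMul x' G) (Matrix.vecMul y' G) := by
    intro x' y' hagree
    have key : lift (fun r => x' (k.succAbove r)) - lift (fun r => y' (k.succAbove r)) =
        x' - y' := by
      funext m
      rcases eq_or_ne m k with rfl | hm
      · have hx : (x' m - y' m) = 0 := by
          rw [hagree m le_rfl]; ring
        simp only [Pi.sub_apply, lift_k, hx, ← Finset.sum_sub_distrib]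
        refine Finset.sum_eq_zero fun r _ => ?_
        rcases hσval r with ⟨_, hv⟩ | ⟨_, hv⟩
        · have : x' (m.succAbove r) = y' (m.succAbove r) := hagree _ (by omega)
          rw [this]; ring
        · have hlt : m < m.succAbove r := by
            rw [Fin.lt_def]; omega
          rw [hlast _ hlt]; ring
      · obtain ⟨r, rfl⟩ := Fin.exists_succAbove_eq hm
        simp [lift_sA]
    rw [hamlift, hammingDist_comm, hammingDist_comm (Matrix.vecMul x' G),
      hammingDist_eq_hammingNorm, hammingDist_eq_hammingNorm, neg_add_eq_sub, neg_add_eq_sub,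
      ← Matrix.sub_vecMul, ← Matrix.sub_vecMul, key]
  refine ⟨?_, ?_, ?_⟩
  · -- bijectivity
    have hGinj : Function.Injective fun u => Matrix.vecMul u G :=
      Matrix.vecMul_injective_iff_isUnit.mpr hG
    have hinj : Function.Injective fun u => Matrix.vecMul u G' := by
      intro x y hxy
      have hall : Matrix.vecMul (lift x) G = Matrix.vecMul (lift y) G := by
        funext m
        rcases eq_or_ne m j with rfl | hm
        · rw [hcolj, hcolj]
        · obtain ⟨c, rfl⟩ := Fin.exists_succAbove_eq hm
          rw [← hG'vm, ← hG'vm]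
          exact congrFun hxy c
      have hl := hGinj hall
      funext r
      have := congrFun hl (k.succAbove r)
      simpa [lift_sA] using this
    exact Finite.injective_iff_bijective.mp hinj
  · -- i < k : D_G(i) ≤ D_{G'}(i)
    intro i hik
    obtain ⟨x, y, hxy1, hxy2, hd⟩ :=
      partialDist_exists (fun u => Matrix.vecMul u G') i
    rw [hd]
    have := hamlift x y
    rw [this]
    refine partialDist_le _ i (lift x) (lift y) ?_ ?_
    · intro m hm
      have hmk : m ≠ k := by
        intro h; subst h; omega
      obtain ⟨r, rfl⟩ := Fin.exists_succAbove_eq hmk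
      rw [lift_sA, lift_sA]
      refine hxy1 r ?_
      rcases hσval r with ⟨_, hv⟩ | ⟨_, hv⟩ <;> omega
    · intro m hm
      have hmk : m ≠ k := by
        intro h; subst h; omega
      obtain ⟨r, rfl⟩ := Fin.exists_succAbove_eq hmk
      rw [lift_sA, lift_sA]
      refine hxy2 r ?_
      rcases hσval r with ⟨h1, hv⟩ | ⟨h1, hv⟩ <;> omega
  · -- k ≤ i < n : D_{G'}(i) = D_G(i+1)
    intro i hki hin
    refine Nat.le_antisymm ?_ ?_
    · -- D_{G'}(i) ≤ D_G(i+1)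
      obtain ⟨x', y', hxy1, hxy2, hd⟩ :=
        partialDist_exists (fun u => Matrix.vecMul u G) (i + 1)
      rw [hd]
      have hagree : ∀ m : Fin (n + 1), (m : ℕ) ≤ (k : ℕ) → x' m = y' m := by
        intro m hm
        exact hxy1 m (by omega)
      have := hC2 x' y' hagree
      rw [← this]
      refine partialDist_le _ i _ _ ?_ ?_
      · intro r hr
        refine hxy1 _ ?_
        rcases hσval r with ⟨_, hv⟩ | ⟨_, hv⟩ <;> omega
      · intro r hr
        refine hxy2 _ ?_
        rcases hσval r with ⟨h1, hv⟩ | ⟨h1, hv⟩ <;> omega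
    · -- D_G(i+1) ≤ D_{G'}(i)
      obtain ⟨x, y, hxy1, hxy2, hd⟩ :=
        partialDist_exists (fun u => Matrix.vecMul u G') i
      rw [hd]
      have := hamlift x y
      rw [this]
      refine partialDist_le _ (i + 1) (lift x) (lift y) ?_ ?_
      · intro m hm
        rcases eq_or_ne k m with rfl | hmk
        · rw [lift_k, lift_k]
          refine Finset.sum_congr rfl fun r _ => ?_
          by_cases hr : (r : ℕ) < i
          · rw [hxy1 r hr]
          · have hkr : (k : ℕ) ≤ (r : ℕ) := by omega
            have hlt : k < k.succAbove r := by
              rcases hσval r with ⟨h1, hv⟩ | ⟨h1, hv⟩ <;>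
                [omega; (rw [Fin.lt_def]; omega)]
            rw [hlast _ hlt, mul_zero, mul_zero]
        · obtain ⟨r, rfl⟩ := Fin.exists_succAbove_eq hmk.symm
          rw [lift_sA, lift_sA]
          refine hxy1 r ?_
          rcases hσval r with ⟨h1, hv⟩ | ⟨h1, hv⟩ <;> omega
      · intro m hm
        have hmk : m ≠ k := by
          intro h; subst h; omega
        obtain ⟨r, rfl⟩ := Fin.exists_succAbove_eq hmk
        rw [lift_sA, lift_sA]
        refine hxy2 r ?_
        rcases hσval r with ⟨h1, hv⟩ | ⟨h1, hv⟩ <;> omega
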